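/- Let (Y, M, μ) be a finite measure space, (e_n)_{n≥1} an orthonormal basis of L²(Y,μ), (g_n) independent N_ℂ(0,1) Gaussians, and c ∈ ℓ²(ℕ*). Fix p ∈ [2,∞). If ∑_{n≥1} |c_n|² ‖e_n‖_{L^p(Y,μ)}² < ∞, then the random series F_c = ∑_n g_n c_n e_n satisfies ‖F_c(ω)‖_{L^p(Y,μ)} < ∞ almost surely. -/

import Mathlib

open MeasureTheory ProbabilityTheory Filter
open scoped ENNReal NNReal

noncomputable section

/-- `Z` is an `N_ℂ(0, σ2)` Gaussian random variable with respect to the probability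
measure `P` : it writes `Z = X + iY` with `X, Y` independent real centered Gaussian
variables, each of variance `σ2`. -/
def IsGaussianC {Ω : Type*} [MeasurableSpace Ω] (P : Measure Ω) (Z : Ω → ℂ)
    (σ2 : ℝ≥0) : Prop :=
  ∃ X Y : Ω → ℝ, (∀ ω, Z ω = X ω + Y ω * Complex.I) ∧ IndepFun X Y P ∧
    Measurable X ∧ Measurable Y ∧
    P.map X = gaussianReal 0 σ2 ∧ P.map Y = gaussianReal 0 σ2

/-- `(e n)` is an orthonormal system in `L²(Y, μ)`. -/
def IsOrthonormalSystem {Y : Type*} [MeasurableSpace Y] (μ : Measure Y)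
    (e : ℕ → Y → ℂ) : Prop :=
  (∀ n, Measurable (e n)) ∧ (∀ n, MemLp (e n) 2 μ) ∧
    ∀ m n, ∫ y, (starRingEnd ℂ) (e m y) * e n y ∂μ = if m = n then 1 else 0

/-- completeness of the system `(e n)` in `L²(Y, μ)` : any `L²` function orthogonal
to all the `e n` vanishes almost everywhere. -/
def IsCompleteSystem {Y : Type*} [MeasurableSpace Y] (μ : Measure Y)
    (e : ℕ → Y → ℂ) : Prop :=
  ∀ f : Y → ℂ, MemLp f 2 μ →
    (∀ n, ∫ y, (starRingEnd ℂ) (e n y) * f y ∂μ = 0) → f =ᵐ[μ] 0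

/-- `(g n)` is a sequence of independent `N_ℂ(0,1)` Gaussian random variables. -/
def IsStdGaussianSeq {Ω : Type*} [MeasurableSpace Ω] (P : Measure Ω)
    (g : ℕ → Ω → ℂ) : Prop :=
  (∀ n, Measurable (g n)) ∧ iIndepFun g P ∧
    ∀ n, IsGaussianC P (g n) 1

/-- `F` is the random series `∑ n, g n • c n • e n`, i.e. the limit in `L²(Ω × Y)`
of the partial sums `∑_{n < N} g n • c n • e n`. -/
def IsL2LimitOfSeries {Ω Y : Type*} [MeasurableSpace Ω] [MeasurableSpace Y]
    (P : Measure Ω) (μ : Measure Y) (g : ℕ → Ω → ℂ) (c : ℕ → ℂ) (e : ℕ → Y → ℂ)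
    (F : Ω → Y → ℂ) : Prop :=
  Measurable (Function.uncurry F) ∧
    Tendsto (fun N => eLpNorm
      (fun q : Ω × Y => F q.1 q.2 - ∑ n ∈ Finset.range N, g n q.1 * c n * e n q.2)
      2 (P.prod μ)) atTop (nhds 0)



section AuxLemmasForStatement4
open Real Set

lemma aux_exp_mul_pdf (t x : ℝ) :
    rexp (t * x) * gaussianPDFReal 0 1 x
      = rexp (t ^ 2 / 2) * ((√(2 * π))⁻¹ * rexp (-(1/2) * (x - t) ^ 2)) := by
  simp only [gaussianPDFReal, NNReal.coe_one, mul_one, sub_zero]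
  rw [mul_comm (√(2 * π))⁻¹, ← mul_assoc, ← Real.exp_add]
  rw [show rexp (t ^ 2 / 2) * ((√(2 * π))⁻¹ * rexp (-(1/2) * (x - t) ^ 2))
      = rexp (t ^ 2 / 2 + -(1/2) * (x - t) ^ 2) * (√(2 * π))⁻¹ by
    rw [Real.exp_add]; ring]
  congr 2
  ring

lemma integrable_exp_mul_pdf (t : ℝ) :
    Integrable (fun x => rexp (t * x) * gaussianPDFReal 0 1 x) := by
  have : Integrable (fun x : ℝ => rexp (t ^ 2 / 2) *
      ((√(2 * π))⁻¹ * rexp (-(1/2) * (x - t) ^ 2))) := by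
    refine (Integrable.const_mul ?_ _).const_mul _
    exact (integrable_exp_neg_mul_sq (by norm_num : (0:ℝ) < 1/2)).comp_sub_right t
  exact this.congr (Filter.Eventually.of_forall fun x => (aux_exp_mul_pdf t x).symm)

lemma integral_exp_mul_pdf (t : ℝ) :
    ∫ x, rexp (t * x) * gaussianPDFReal 0 1 x = rexp (t ^ 2 / 2) := by
  simp_rw [aux_exp_mul_pdf t]
  rw [integral_const_mul, integral_const_mul]
  have h1 : ∫ x : ℝ, rexp (-(1/2) * (x - t) ^ 2)
      = ∫ x : ℝ, rexp (-(1/2) * x ^ 2) :=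
    integral_sub_right_eq_self (fun x => rexp (-(1/2) * x ^ 2)) t
  rw [h1, integral_gaussian]
  have h2 : √(π / (1/2)) = √(2 * π) := by norm_num [mul_comm]
  rw [h2, inv_mul_cancel₀, mul_one]
  positivity

lemma gaussianReal_eq_withDensity :
    gaussianReal 0 1 = volume.withDensity (fun x => ((gaussianPDFReal 0 1 x).toNNReal : ℝ≥0∞)) := by
  rw [gaussianReal_of_var_ne_zero 0 one_ne_zero]
  rfl

lemma integrable_exp_mul_gaussianReal (t : ℝ) :
    Integrable (fun x => rexp (t * x)) (gaussianReal 0 1) := by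
  rw [gaussianReal_eq_withDensity]
  rw [integrable_withDensity_iff (by
    exact (measurable_gaussianPDFReal 0 1).real_toNNReal.coe_nnreal_ennreal)
    (Filter.Eventually.of_forall fun x => ENNReal.coe_lt_top)]
  refine (integrable_exp_mul_pdf t).congr (Filter.Eventually.of_forall fun x => ?_)
  simp [ENNReal.coe_toReal, Real.coe_toNNReal _ (gaussianPDFReal_nonneg 0 1 x)]

lemma integral_exp_mul_gaussianReal (t : ℝ) :
    ∫ x, rexp (t * x) ∂(gaussianReal 0 1) = rexp (t ^ 2 / 2) := by
  rw [gaussianReal_eq_withDensity,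
    integral_withDensity_eq_integral_smul (measurable_gaussianPDFReal 0 1).real_toNNReal]
  rw [← integral_exp_mul_pdf t]
  congr 1 with x
  simp [NNReal.smul_def, Real.coe_toNNReal _ (gaussianPDFReal_nonneg 0 1 x), mul_comm]

lemma mgf_of_gaussian {Ω : Type*} [MeasurableSpace Ω] {P : Measure Ω} {X : Ω → ℝ}
    (hX : Measurable X) (hmap : P.map X = gaussianReal 0 1) (t : ℝ) :
    Integrable (fun ω => rexp (t * X ω)) P ∧ mgf X P t = rexp (t ^ 2 / 2) := by
  have hae : AEStronglyMeasurable (fun x => rexp (t * x)) (P.map X) :=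
    (Real.continuous_exp.comp (continuous_const.mul continuous_id)).aestronglyMeasurable
  constructor
  · have : Integrable (fun x => rexp (t * x)) (P.map X) := by
      rw [hmap]; exact _root_.integrable_exp_mul_gaussianReal t
    exact (integrable_map_measure hae hX.aemeasurable).mp this
  · rw [mgf, ← integral_map hX.aemeasurable hae, hmap, _root_.integral_exp_mul_gaussianReal]

lemma mgf_const_mul_gaussian {Ω : Type*} [MeasurableSpace Ω] {P : Measure Ω} {X : Ω → ℝ}
    (hX : Measurable X) (hmap : P.map X = gaussianReal 0 1) (α t : ℝ) :
    Integrable (fun ω => rexp (t * (α * X ω))) P ∧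
      mgf (fun ω => α * X ω) P t = rexp (α ^ 2 * t ^ 2 / 2) := by
  have h := mgf_of_gaussian hX hmap (t * α)
  have hfun : (fun ω => rexp (t * (α * X ω))) = fun ω => rexp (t * α * X ω) := by
    funext ω; ring_nf
  constructor
  · rw [hfun]; exact h.1
  · have : mgf (fun ω => α * X ω) P t = mgf X P (t * α) := by
      unfold mgf
      rw [show (fun ω => rexp (t * (α * X ω))) = fun ω => rexp (t * α * X ω) from hfun]
    rw [this, h.2]
    congr 1
    ring

lemma mgf_re_mul_of_isGaussianC {Ω : Type*} [MeasurableSpace Ω] {P : Measure Ω} {g : Ω → ℂ}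
    (hg : IsGaussianC P g 1) (a : ℂ) (t : ℝ) :
    Integrable (fun ω => rexp (t * (a * g ω).re)) P ∧
      mgf (fun ω => (a * g ω).re) P t = rexp (‖a‖ ^ 2 * t ^ 2 / 2) := by
  obtain ⟨X, Y, hXY, hind, hXm, hYm, hXmap, hYmap⟩ := hg
  have hW : (fun ω => (a * g ω).re)
      = (fun ω => a.re * X ω) + (fun ω => (-a.im) * Y ω) := by
    funext ω
    simp only [Pi.add_apply, hXY ω]
    simp [Complex.mul_re, Complex.add_re, Complex.add_im, Complex.mul_im]
    ring
  have hindep : IndepFun (fun ω => a.re * X ω) (fun ω => (-a.im) * Y ω) P :=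
    hind.comp (measurable_const_mul a.re) (measurable_const_mul (-a.im))
  have h1 := mgf_const_mul_gaussian hXm hXmap a.re t
  have h2 := mgf_const_mul_gaussian hYm hYmap (-a.im) t
  have hnorm : ‖a‖ ^ 2 = a.re ^ 2 + a.im ^ 2 := by
    rw [Complex.sq_norm, Complex.normSq_apply]; ring
  constructor
  · have h3 := hindep.integrable_exp_mul_add h1.1 h2.1
    exact h3.congr (Filter.Eventually.of_forall fun ω => by simp only [← congrFun hW ω])
  · rw [hW, hindep.mgf_add h1.1.aestronglyMeasurable h2.1.aestronglyMeasurable, h1.2, h2.2,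
      ← Real.exp_add]
    congr 1
    rw [hnorm]; ring

lemma mgf_sum_re_of_gaussianSeq {Ω : Type*} [MeasurableSpace Ω] {P : Measure Ω}
    [IsProbabilityMeasure P] {g : ℕ → Ω → ℂ} (hg : IsStdGaussianSeq P g)
    (a : ℕ → ℂ) (N : ℕ) (t : ℝ) :
    Integrable (fun ω => rexp (t * ∑ n ∈ Finset.range N, (a n * g n ω).re)) P ∧
      mgf (fun ω => ∑ n ∈ Finset.range N, (a n * g n ω).re) P t
        = rexp ((∑ n ∈ Finset.range N, ‖a n‖ ^ 2) * t ^ 2 / 2) := by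
  obtain ⟨hgm, hgi, hgC⟩ := hg
  set h : ℕ → Ω → ℝ := fun n ω => (a n * g n ω).re with hh
  have hmeas : ∀ n, Measurable (h n) := fun n =>
    Complex.measurable_re.comp ((hgm n).const_mul (a n))
  have hiind : iIndepFun h P := by
    have := hgi.comp (fun n (z : ℂ) => (a n * z).re)
      (fun n => Complex.measurable_re.comp (measurable_const_mul (a n)))
    exact this
  have hfun : (fun ω => ∑ n ∈ Finset.range N, (a n * g n ω).re)
      = ∑ n ∈ Finset.range N, h n := by
    funext ω; rw [Finset.sum_apply]
  constructor
  · rw [show (fun ω => rexp (t * ∑ n ∈ Finset.range N, (a n * g n ω).re))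
        = fun ω => rexp (t * (∑ n ∈ Finset.range N, h n) ω) by
      funext ω; rw [Finset.sum_apply]]
    exact hiind.integrable_exp_mul_sum hmeas
      (fun n _ => (mgf_re_mul_of_isGaussianC (hgC n) (a n) t).1)
  · rw [hfun, hiind.mgf_sum hmeas]
    have : ∀ n ∈ Finset.range N, mgf (h n) P t = rexp (‖a n‖ ^ 2 * t ^ 2 / 2) := fun n _ =>
      (mgf_re_mul_of_isGaussianC (hgC n) (a n) t).2
    rw [Finset.prod_congr rfl this, ← Real.exp_sum]
    congr 1
    rw [Finset.sum_mul, Finset.sum_div]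

lemma tail_bound {Ω : Type*} [MeasurableSpace Ω] {P : Measure Ω} [IsProbabilityMeasure P]
    {W : Ω → ℝ} {σ2 : ℝ} (hσ : 0 < σ2)
    (hint : ∀ t, Integrable (fun ω => rexp (t * W ω)) P)
    (hmgf : ∀ t, mgf W P t = rexp (σ2 * t ^ 2 / 2)) {ε : ℝ} (hε : 0 < ε) :
    P {ω | ε ≤ W ω} ≤ ENNReal.ofReal (rexp (-ε ^ 2 / (2 * σ2))) := by
  set t := ε / σ2 with ht
  have ht0 : 0 ≤ t := by positivity
  have h := measure_ge_le_exp_mul_mgf (μ := P) (X := W) ε ht0 (hint t)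
  rw [hmgf t] at h
  have h2 : rexp (-t * ε) * rexp (σ2 * t ^ 2 / 2) = rexp (-ε ^ 2 / (2 * σ2)) := by
    rw [← Real.exp_add]
    congr 1
    rw [ht]
    field_simp
    ring
  rw [h2] at h
  exact (ENNReal.le_ofReal_iff_toReal_le (measure_ne_top _ _) (Real.exp_nonneg _)).mpr h

lemma tail_bound_complex {Ω : Type*} [MeasurableSpace Ω] {P : Measure Ω}
    [IsProbabilityMeasure P] {g : ℕ → Ω → ℂ} (hg : IsStdGaussianSeq P g)
    (a : ℕ → ℂ) (N : ℕ) (hσ : 0 < ∑ n ∈ Finset.range N, ‖a n‖ ^ 2)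
    {ε : ℝ} (hε : 0 < ε) :
    P {ω | ε ≤ ‖∑ n ∈ Finset.range N, a n * g n ω‖}
      ≤ ENNReal.ofReal (4 * rexp (-ε ^ 2 / (8 * ∑ n ∈ Finset.range N, ‖a n‖ ^ 2))) := by
  set σ2 := ∑ n ∈ Finset.range N, ‖a n‖ ^ 2 with hσ2
  -- the four real random variables
  set W : (ℕ → ℂ) → Ω → ℝ := fun b ω => ∑ n ∈ Finset.range N, (b n * g n ω).re with hWdef
  have htail : ∀ b : ℕ → ℂ, (∑ n ∈ Finset.range N, ‖b n‖ ^ 2) = σ2 →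
      P {ω | ε / 2 ≤ W b ω} ≤ ENNReal.ofReal (rexp (-ε ^ 2 / (8 * σ2))) := by
    intro b hb
    have h1 := fun t => (mgf_sum_re_of_gaussianSeq hg b N t).1
    have h2 : ∀ t, mgf (fun ω => ∑ n ∈ Finset.range N, (b n * g n ω).re) P t
        = rexp (σ2 * t ^ 2 / 2) := by
      intro t; rw [(mgf_sum_re_of_gaussianSeq hg b N t).2, hb]
    have h3 := tail_bound hσ h1 h2 (by positivity : (0:ℝ) < ε / 2)
    have heq : -(ε / 2) ^ 2 / (2 * σ2) = -ε ^ 2 / (8 * σ2) := by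
      rw [div_eq_div_iff (by positivity) (by positivity)]
      ring
    rwa [heq] at h3
  have hIre : ∀ w : ℂ, (-Complex.I * w).re = w.im := fun w => by simp
  have hIre' : ∀ w : ℂ, (Complex.I * w).re = -w.im := fun w => by simp
  have hsub : {ω | ε ≤ ‖∑ n ∈ Finset.range N, a n * g n ω‖} ⊆
      ({ω | ε/2 ≤ W a ω} ∪ {ω | ε/2 ≤ W (fun n => -a n) ω}) ∪
      ({ω | ε/2 ≤ W (fun n => -Complex.I * a n) ω} ∪
        {ω | ε/2 ≤ W (fun n => Complex.I * a n) ω}) := by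
    intro ω hω
    simp only [Set.mem_setOf_eq] at hω
    set z := ∑ n ∈ Finset.range N, a n * g n ω with hz
    have hre : W a ω = z.re := by
      simp only [hWdef, hz, Complex.re_sum]
    have hnre : W (fun n => -a n) ω = -z.re := by
      simp only [hWdef, hz, Complex.re_sum, neg_mul, Complex.neg_re, Finset.sum_neg_distrib]
    have him : W (fun n => -Complex.I * a n) ω = z.im := by
      simp only [hWdef, hz, Complex.im_sum]
      refine Finset.sum_congr rfl fun n _ => ?_
      rw [mul_assoc, hIre]
    have hnim : W (fun n => Complex.I * a n) ω = -z.im := by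
      simp only [hWdef, hz, Complex.im_sum, ← Finset.sum_neg_distrib]
      refine Finset.sum_congr rfl fun n _ => ?_
      rw [mul_assoc, hIre']
    have habs : ‖z‖ ≤ |z.re| + |z.im| := Complex.norm_le_abs_re_add_abs_im z
    rcases le_or_gt (ε/2) |z.re| with hc | hc
    · rcases le_abs.mp hc with h | h
      · exact Or.inl (Or.inl (by simpa [hre] using h))
      · exact Or.inl (Or.inr (by simp only [Set.mem_setOf_eq, hnre]; linarith))
    · have h2 : ε/2 ≤ |z.im| := by linarith
      rcases le_abs.mp h2 with h | h
      · exact Or.inr (Or.inl (by simp only [Set.mem_setOf_eq, him]; exact h))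
      · exact Or.inr (Or.inr (by simp only [Set.mem_setOf_eq, hnim]; linarith))
  have hb1 : (∑ n ∈ Finset.range N, ‖-a n‖ ^ 2) = σ2 := by simp [hσ2]
  have hb2 : (∑ n ∈ Finset.range N, ‖-Complex.I * a n‖ ^ 2) = σ2 := by
    simp [hσ2, norm_mul]
  have hb3 : (∑ n ∈ Finset.range N, ‖Complex.I * a n‖ ^ 2) = σ2 := by
    simp [hσ2, norm_mul]
  set r := ENNReal.ofReal (rexp (-ε ^ 2 / (8 * σ2))) with hr
  have h1 := htail a rfl
  have h2 := htail (fun n => -a n) hb1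
  have h3 := htail (fun n => -Complex.I * a n) hb2
  have h4 := htail (fun n => Complex.I * a n) hb3
  calc P {ω | ε ≤ ‖∑ n ∈ Finset.range N, a n * g n ω‖}
      ≤ P (({ω | ε/2 ≤ W a ω} ∪ {ω | ε/2 ≤ W (fun n => -a n) ω}) ∪
          ({ω | ε/2 ≤ W (fun n => -Complex.I * a n) ω} ∪
            {ω | ε/2 ≤ W (fun n => Complex.I * a n) ω})) := measure_mono hsub
    _ ≤ (P {ω | ε/2 ≤ W a ω} + P {ω | ε/2 ≤ W (fun n => -a n) ω}) +
          (P {ω | ε/2 ≤ W (fun n => -Complex.I * a n) ω} +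
            P {ω | ε/2 ≤ W (fun n => Complex.I * a n) ω}) :=
        le_trans (measure_union_le _ _) (add_le_add (measure_union_le _ _) (measure_union_le _ _))
    _ ≤ (r + r) + (r + r) := add_le_add (add_le_add h1 h2) (add_le_add h3 h4)
    _ = 4 * r := by ring
    _ = ENNReal.ofReal (4 * rexp (-ε ^ 2 / (8 * σ2))) := by
        rw [ENNReal.ofReal_mul (by norm_num : (0:ℝ) ≤ 4)]
        norm_num [hr]

lemma integral_rpow_exp_scaled {p σ2 : ℝ} (hp : 2 ≤ p) (hσ : 0 < σ2) :
    ∫ t in Ioi (0:ℝ), t ^ (p-1) * rexp (-t^2 / (8*σ2))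
      = (8*σ2) ^ (p/2) * ∫ x in Ioi (0:ℝ), x ^ (p-1) * rexp (-x^2) := by
  set c := Real.sqrt (8*σ2) with hc
  have h8 : (0:ℝ) < 8 * σ2 := by positivity
  have hcpos : 0 < c := Real.sqrt_pos.mpr h8
  have hc2 : c ^ 2 = 8 * σ2 := Real.sq_sqrt h8.le
  have hcp : (0:ℝ) < c ^ (p-1) := Real.rpow_pos_of_pos hcpos _
  have key := integral_comp_mul_left_Ioi (fun x => x ^ (p-1) * rexp (-x^2)) 0
    (inv_pos.mpr hcpos)
  simp only [mul_zero, inv_inv, smul_eq_mul] at key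
  have step1 : ∫ t in Ioi (0:ℝ), t ^ (p-1) * rexp (-t^2 / (8*σ2))
      = c ^ (p-1) * ∫ x in Ioi (0:ℝ), (c⁻¹ * x) ^ (p-1) * rexp (-(c⁻¹ * x)^2) := by
    rw [← integral_const_mul]
    refine setIntegral_congr_fun measurableSet_Ioi (fun x hx => ?_)
    have hx0 : (0:ℝ) < x := hx
    have h1 : (c⁻¹ * x) ^ (p-1) = (c ^ (p-1))⁻¹ * x ^ (p-1) := by
      rw [Real.mul_rpow (by positivity) hx0.le, Real.inv_rpow hcpos.le]
    have h2 : -(c⁻¹ * x)^2 = -x^2/(8*σ2) := by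
      rw [mul_pow, inv_pow, hc2]
      ring
    rw [h1, h2]
    field_simp
  rw [step1, key, ← mul_assoc]
  congr 1
  have hcc : c ^ (p-1) * c = c ^ p := by
    nth_rewrite 2 [← Real.rpow_one c]
    rw [← Real.rpow_add hcpos]
    ring_nf
  rw [hcc, hc, Real.sqrt_eq_rpow, ← Real.rpow_mul h8.le]
  congr 1
  ring

lemma moment_bound {Ω : Type*} [MeasurableSpace Ω] {P : Measure Ω}
    [IsProbabilityMeasure P] {g : ℕ → Ω → ℂ} (hg : IsStdGaussianSeq P g)
    (a : ℕ → ℂ) (N : ℕ) {p : ℝ} (hp : 2 ≤ p) :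
    ∫⁻ ω, (ENNReal.ofReal ‖∑ n ∈ Finset.range N, a n * g n ω‖) ^ p ∂P
      ≤ ENNReal.ofReal (4 * p * 8 ^ (p/2) * ∫ x in Ioi (0:ℝ), x ^ (p-1) * rexp (-x^2))
        * ENNReal.ofReal ((∑ n ∈ Finset.range N, ‖a n‖ ^ 2) ^ (p/2)) := by
  have hp0 : (0:ℝ) < p := by linarith
  set σ2 := ∑ n ∈ Finset.range N, ‖a n‖ ^ 2 with hσ2
  have hσnn : 0 ≤ σ2 := Finset.sum_nonneg fun n _ => by positivity
  rcases eq_or_lt_of_le hσnn with hσ0 | hσpos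
  · -- degenerate case
    have hz : ∀ ω, ∑ n ∈ Finset.range N, a n * g n ω = 0 := by
      intro ω
      refine Finset.sum_eq_zero fun n hn => ?_
      have h1 : ‖a n‖ ^ 2 = 0 :=
        (Finset.sum_eq_zero_iff_of_nonneg (fun n _ => by positivity)).mp hσ0.symm n hn
      have h2 : a n = 0 := by
        have := pow_eq_zero_iff (n := 2) (by norm_num) |>.mp h1
        simpa using this
      simp [h2]
    simp only [hz, norm_zero, ENNReal.ofReal_zero, ENNReal.zero_rpow_of_pos hp0,
      lintegral_const, zero_mul]
    exact zero_le
  · set S : Ω → ℂ := fun ω => ∑ n ∈ Finset.range N, a n * g n ω with hS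
    have hSm : Measurable S := Finset.measurable_sum _ fun n _ => ((hg.1 n).const_mul (a n))
    have hfm : Measurable fun ω => ‖S ω‖ := hSm.norm
    have hInonneg : (0:ℝ) ≤ ∫ x in Ioi (0:ℝ), x ^ (p-1) * rexp (-x^2) :=
      setIntegral_nonneg measurableSet_Ioi fun x hx => by
        have : (0:ℝ) < x := hx
        positivity
    have hg_int : ∀ t > (0:ℝ), IntervalIntegrable (fun s => p * s ^ (p-1)) volume 0 t :=
      fun t _ => (intervalIntegral.intervalIntegrable_rpow' (by linarith)).const_mul p
    have hg_nn : ∀ᵐ t ∂(volume.restrict (Ioi (0:ℝ))), 0 ≤ p * t ^ (p-1) := by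
      refine (ae_restrict_iff' measurableSet_Ioi).mpr (Filter.Eventually.of_forall fun t ht => ?_)
      have : (0:ℝ) < t := ht
      positivity
    have hlayer := lintegral_comp_eq_lintegral_meas_le_mul P
      (Filter.Eventually.of_forall fun ω => norm_nonneg (S ω)) hfm.aemeasurable hg_int hg_nn
    have heq : ∀ ω, (ENNReal.ofReal ‖S ω‖) ^ p
        = ENNReal.ofReal (∫ t in (0:ℝ)..‖S ω‖, p * t ^ (p-1)) := by
      intro ω
      rw [intervalIntegral.integral_const_mul, integral_rpow (Or.inl (by linarith : (-1:ℝ) < p-1))]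
      rw [show p - 1 + 1 = p by ring, Real.zero_rpow hp0.ne', sub_zero]
      rw [mul_comm p, div_mul_cancel₀ _ hp0.ne']
      exact ENNReal.ofReal_rpow_of_nonneg (norm_nonneg _) hp0.le
    have hInt : IntegrableOn (fun t => 4 * rexp (-t^2 / (8*σ2)) * (p * t ^ (p-1)))
        (Ioi (0:ℝ)) := by
      have hb : (0:ℝ) < (8*σ2)⁻¹ := by positivity
      have hbase := integrable_rpow_mul_exp_neg_mul_sq hb (by linarith : (-1:ℝ) < p - 1)
      have : IntegrableOn (fun t : ℝ => (4*p) * (t ^ (p-1) * rexp (-((8*σ2)⁻¹) * t^2)))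
          (Ioi (0:ℝ)) := (hbase.integrableOn).const_mul _
      refine this.congr_fun (fun t _ => ?_) measurableSet_Ioi
      beta_reduce
      rw [show -((8*σ2)⁻¹) * t^2 = -t^2/(8*σ2) by ring]
      ring
    have hnn2 : 0 ≤ᵐ[volume.restrict (Ioi (0:ℝ))]
        fun t => 4 * rexp (-t^2 / (8*σ2)) * (p * t ^ (p-1)) := by
      refine (ae_restrict_iff' measurableSet_Ioi).mpr (Filter.Eventually.of_forall fun t ht => ?_)
      have : (0:ℝ) < t := ht
      positivity
    calc ∫⁻ ω, (ENNReal.ofReal ‖S ω‖) ^ p ∂P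
        = ∫⁻ t in Ioi (0:ℝ), P {ω | t ≤ ‖S ω‖} * ENNReal.ofReal (p * t ^ (p-1)) := by
          simp only [heq]; exact hlayer
      _ ≤ ∫⁻ t in Ioi (0:ℝ), ENNReal.ofReal (4 * rexp (-t^2 / (8*σ2)) * (p * t ^ (p-1))) := by
          refine setLIntegral_mono' measurableSet_Ioi fun t ht => ?_
          rw [ENNReal.ofReal_mul (show (0:ℝ) ≤ 4 * rexp (-t^2/(8*σ2)) by positivity)]
          exact mul_le_mul_left (tail_bound_complex hg a N hσpos ht) _
      _ = ENNReal.ofReal (∫ t in Ioi (0:ℝ), 4 * rexp (-t^2 / (8*σ2)) * (p * t ^ (p-1))) :=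
          (ofReal_integral_eq_lintegral_ofReal hInt hnn2).symm
      _ = ENNReal.ofReal (4 * p * ((8*σ2) ^ (p/2) * ∫ x in Ioi (0:ℝ), x ^ (p-1) * rexp (-x^2))) := by
          congr 1
          rw [← integral_rpow_exp_scaled hp hσpos, ← integral_const_mul]
          refine setIntegral_congr_fun measurableSet_Ioi fun t _ => ?_
          ring
      _ ≤ ENNReal.ofReal (4 * p * 8 ^ (p/2) * ∫ x in Ioi (0:ℝ), x ^ (p-1) * rexp (-x^2))
            * ENNReal.ofReal (σ2 ^ (p/2)) := by
          rw [← ENNReal.ofReal_mul (by positivity)]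
          apply ENNReal.ofReal_le_ofReal
          apply le_of_eq
          rw [Real.mul_rpow (by norm_num : (0:ℝ) ≤ 8) hσnn]
          ring

lemma minkowski_bound {Y : Type*} [MeasurableSpace Y] {μ : Measure Y}
    (e : ℕ → Y → ℂ) (c : ℕ → ℂ) (he : ∀ n, Measurable (e n)) {p : ℝ} (hp : 2 ≤ p) (N : ℕ) :
    ∫⁻ y, ENNReal.ofReal ((∑ n ∈ Finset.range N, ‖c n * e n y‖ ^ 2) ^ (p / 2)) ∂μ
      ≤ (∑' n, ENNReal.ofReal (‖c n‖ ^ 2) * eLpNorm (e n) (ENNReal.ofReal p) μ ^ 2) ^ (p/2) := by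
  have hp2 : (1:ℝ) ≤ p / 2 := by linarith
  have hp2pos : (0:ℝ) < p / 2 := by linarith
  set q : ℝ≥0∞ := ENNReal.ofReal (p/2) with hq
  have hq0 : q ≠ 0 := by simp [hq, ENNReal.ofReal_eq_zero]; linarith
  have hqt : q ≠ ∞ := ENNReal.ofReal_ne_top
  have hqr : q.toReal = p/2 := ENNReal.toReal_ofReal hp2pos.le
  set f : Y → ℝ := fun y => ∑ n ∈ Finset.range N, ‖c n * e n y‖ ^ 2 with hf
  have hfnn : ∀ y, 0 ≤ f y := fun y => Finset.sum_nonneg fun n _ => by positivity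
  -- step 1 : lintegral = eLpNorm ^ (p/2)
  have step1 : ∫⁻ y, ENNReal.ofReal ((f y) ^ (p / 2)) ∂μ = eLpNorm f q μ ^ (p/2) := by
    rw [eLpNorm_eq_lintegral_rpow_enorm_toReal hq0 hqt, hqr, ← ENNReal.rpow_mul,
      one_div, inv_mul_cancel₀ hp2pos.ne', ENNReal.rpow_one]
    refine lintegral_congr fun y => ?_
    rw [← ENNReal.ofReal_rpow_of_nonneg (hfnn y) hp2pos.le]
    congr 1
    rw [Real.enorm_eq_ofReal (hfnn y)]
  rw [step1]
  refine ENNReal.rpow_le_rpow ?_ hp2pos.le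
  -- step 2 : Minkowski
  have hfsum : f = ∑ n ∈ Finset.range N, (fun y => (‖c n‖ ^ 2) * ‖e n y‖ ^ 2) := by
    funext y
    rw [Finset.sum_apply]
    refine Finset.sum_congr rfl fun n _ => ?_
    rw [norm_mul, mul_pow]
  have hterm : ∀ n, eLpNorm (fun y => (‖c n‖ ^ 2) * ‖e n y‖ ^ 2) q μ
      = ENNReal.ofReal (‖c n‖ ^ 2) * eLpNorm (e n) (ENNReal.ofReal p) μ ^ 2 := by
    intro n
    have h1 : eLpNorm (fun y => (‖c n‖ ^ 2) * ‖e n y‖ ^ 2) q μ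
        = (‖(‖c n‖ ^ 2 : ℝ)‖₊ : ℝ≥0∞) * eLpNorm (fun y => ‖e n y‖ ^ 2) q μ :=
      eLpNorm_const_smul (‖c n‖ ^ 2 : ℝ) (fun y => ‖e n y‖ ^ 2) q μ
    rw [h1, ← enorm_eq_nnnorm, Real.enorm_eq_ofReal (by positivity)]
    congr 1
    have h2 : (fun y => ‖e n y‖ ^ 2) = fun y => ‖e n y‖ ^ ((2:ℕ) : ℝ) := by
      funext y; rw [Real.rpow_natCast]
    rw [h2]
    have h3 := eLpNorm_norm_rpow (e n) (μ := μ) (p := q) (q := ((2:ℕ):ℝ)) (by norm_num)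
    rw [h3, ENNReal.rpow_natCast]
    congr 1
    rw [hq, ← ENNReal.ofReal_mul (by linarith : (0:ℝ) ≤ p/2)]
    congr 1
    push_cast
    field_simp
  calc eLpNorm f q μ
      ≤ ∑ n ∈ Finset.range N, eLpNorm (fun y => (‖c n‖ ^ 2) * ‖e n y‖ ^ 2) q μ := by
        rw [hfsum]
        refine eLpNorm_sum_le (fun n _ => ?_) (ENNReal.one_le_ofReal.mpr hp2)
        exact (((he n).norm.pow_const 2).const_mul _).aestronglyMeasurable
    _ = ∑ n ∈ Finset.range N,
          ENNReal.ofReal (‖c n‖ ^ 2) * eLpNorm (e n) (ENNReal.ofReal p) μ ^ 2 :=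
        Finset.sum_congr rfl fun n _ => hterm n
    _ ≤ ∑' n, ENNReal.ofReal (‖c n‖ ^ 2) * eLpNorm (e n) (ENNReal.ofReal p) μ ^ 2 :=
        ENNReal.sum_le_tsum _

end AuxLemmasForStatement4

/-- if `∑ n, |c n|² ‖e n‖_{L^p}² < ∞` then the random series
`F_c = ∑ n, g n * c n * e n` has finite `L^p(Y, μ)` norm almost surely. -/
theorem lp_norm_finite_of_summable {Ω Y : Type*} [MeasurableSpace Ω] [MeasurableSpace Y]
    (P : Measure Ω) (μ : Measure Y) [IsProbabilityMeasure P] [IsFiniteMeasure μ]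
    (e : ℕ → Y → ℂ) (c : ℕ → ℂ) (g : ℕ → Ω → ℂ) (F : Ω → Y → ℂ)
    (he : IsOrthonormalSystem μ e) (hec : IsCompleteSystem μ e)
    (hc : Summable fun n => ‖c n‖ ^ 2)
    (hg : IsStdGaussianSeq P g) (hF : IsL2LimitOfSeries P μ g c e F)
    (p : ℝ) (hp : 2 ≤ p)
    (hsum : ∑' n, ENNReal.ofReal (‖c n‖ ^ 2) *
        eLpNorm (e n) (ENNReal.ofReal p) μ ^ 2 < ⊤) :
    ∀ᵐ ω ∂P, eLpNorm (F ω) (ENNReal.ofReal p) μ < ⊤ := by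
  have hp0 : (0:ℝ) < p := by linarith
  have hSmeas : ∀ N, Measurable (fun q : Ω × Y =>
      ∑ n ∈ Finset.range N, g n q.1 * c n * e n q.2) := fun N =>
    Finset.measurable_sum _ fun n _ =>
      (((hg.1 n).comp measurable_fst).mul_const (c n)).mul ((he.1 n).comp measurable_snd)
  have hrpm : ∀ (f : Ω × Y → ℂ), Measurable f →
      Measurable fun q => (ENNReal.ofReal ‖f q‖) ^ p := fun f hf =>
    ENNReal.continuous_rpow_const.measurable.comp hf.norm.ennreal_ofReal
  -- finiteness of the bound
  have hBtop : ENNReal.ofReal (4 * p * 8 ^ (p/2) * ∫ x in Set.Ioi (0:ℝ),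
        x ^ (p-1) * Real.exp (-x^2)) *
      (∑' n, ENNReal.ofReal (‖c n‖ ^ 2) * eLpNorm (e n) (ENNReal.ofReal p) μ ^ 2) ^ (p/2)
        ≠ ⊤ :=
    ENNReal.mul_ne_top ENNReal.ofReal_ne_top
      (ENNReal.rpow_lt_top_of_nonneg (by positivity) hsum.ne).ne
  -- uniform moment bound on partial sums
  have hbound : ∀ N, ∫⁻ q, (ENNReal.ofReal
        ‖∑ n ∈ Finset.range N, g n q.1 * c n * e n q.2‖) ^ p ∂(P.prod μ)
      ≤ ENNReal.ofReal (4 * p * 8 ^ (p/2) * ∫ x in Set.Ioi (0:ℝ),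
          x ^ (p-1) * Real.exp (-x^2)) *
        (∑' n, ENNReal.ofReal (‖c n‖ ^ 2) * eLpNorm (e n) (ENNReal.ofReal p) μ ^ 2) ^ (p/2) := by
    intro N
    rw [lintegral_prod_symm _ (hrpm _ (hSmeas N)).aemeasurable]
    have hy : ∀ y : Y, ∫⁻ ω, (ENNReal.ofReal
          ‖∑ n ∈ Finset.range N, g n (ω, y).1 * c n * e n (ω, y).2‖) ^ p ∂P
        ≤ ENNReal.ofReal (4 * p * 8 ^ (p/2) * ∫ x in Set.Ioi (0:ℝ),
            x ^ (p-1) * Real.exp (-x^2)) *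
          ENNReal.ofReal ((∑ n ∈ Finset.range N, ‖c n * e n y‖ ^ 2) ^ (p/2)) := by
      intro y
      have hmb := moment_bound hg (fun n => c n * e n y) N hp
      have harg : ∀ ω : Ω, ∑ n ∈ Finset.range N, (c n * e n y) * g n ω
          = ∑ n ∈ Finset.range N, g n ω * c n * e n y := by
        intro ω
        exact Finset.sum_congr rfl fun n _ => by ring
      simpa only [harg] using hmb
    calc ∫⁻ y, ∫⁻ ω, (ENNReal.ofReal
            ‖∑ n ∈ Finset.range N, g n (ω, y).1 * c n * e n (ω, y).2‖) ^ p ∂P ∂μ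
        ≤ ∫⁻ y, ENNReal.ofReal (4 * p * 8 ^ (p/2) * ∫ x in Set.Ioi (0:ℝ),
              x ^ (p-1) * Real.exp (-x^2)) *
            ENNReal.ofReal ((∑ n ∈ Finset.range N, ‖c n * e n y‖ ^ 2) ^ (p/2)) ∂μ :=
          lintegral_mono hy
      _ = ENNReal.ofReal (4 * p * 8 ^ (p/2) * ∫ x in Set.Ioi (0:ℝ),
              x ^ (p-1) * Real.exp (-x^2)) *
            ∫⁻ y, ENNReal.ofReal ((∑ n ∈ Finset.range N, ‖c n * e n y‖ ^ 2) ^ (p/2)) ∂μ :=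
          lintegral_const_mul' _ _ ENNReal.ofReal_ne_top
      _ ≤ _ := mul_le_mul_right (minkowski_bound e c he.1 hp N) _
  -- convergence in measure and a.e. convergent subsequence
  have hFaem : Measurable fun q : Ω × Y => F q.1 q.2 := hF.1
  have htend : Tendsto (fun N => eLpNorm
      ((fun q : Ω × Y => ∑ n ∈ Finset.range N, g n q.1 * c n * e n q.2)
        - fun q : Ω × Y => F q.1 q.2) 2 (P.prod μ)) atTop (nhds 0) := by
    refine hF.2.congr fun N => ?_
    exact eLpNorm_sub_comm _ _ _ _
  have hTIM : TendstoInMeasure (P.prod μ)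
      (fun N (q : Ω × Y) => ∑ n ∈ Finset.range N, g n q.1 * c n * e n q.2) atTop
      (fun q : Ω × Y => F q.1 q.2) :=
    tendstoInMeasure_of_tendsto_eLpNorm two_ne_zero
      (fun N => (hSmeas N).aestronglyMeasurable) hFaem.aestronglyMeasurable htend
  obtain ⟨ns, _, hae⟩ := hTIM.exists_seq_tendsto_ae
  -- Fatou
  have hFatou : ∫⁻ q, (ENNReal.ofReal ‖F q.1 q.2‖) ^ p ∂(P.prod μ)
      ≤ ENNReal.ofReal (4 * p * 8 ^ (p/2) * ∫ x in Set.Ioi (0:ℝ),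
          x ^ (p-1) * Real.exp (-x^2)) *
        (∑' n, ENNReal.ofReal (‖c n‖ ^ 2) * eLpNorm (e n) (ENNReal.ofReal p) μ ^ 2) ^ (p/2) := by
    have h1 : ∀ᵐ q ∂(P.prod μ), (ENNReal.ofReal ‖F q.1 q.2‖) ^ p
        = liminf (fun k => (ENNReal.ofReal
            ‖∑ n ∈ Finset.range (ns k), g n q.1 * c n * e n q.2‖) ^ p) atTop := by
      filter_upwards [hae] with q hq
      have h3 : Tendsto (fun k => (ENNReal.ofReal
          ‖∑ n ∈ Finset.range (ns k), g n q.1 * c n * e n q.2‖) ^ p) atTop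
          (nhds ((ENNReal.ofReal ‖F q.1 q.2‖) ^ p)) :=
        (ENNReal.continuous_rpow_const.tendsto _).comp
          ((ENNReal.continuous_ofReal.tendsto _).comp ((continuous_norm.tendsto _).comp hq))
      exact h3.liminf_eq.symm
    rw [lintegral_congr_ae h1]
    refine (lintegral_liminf_le fun k => hrpm _ (hSmeas (ns k))).trans ?_
    calc liminf (fun k => ∫⁻ q, (ENNReal.ofReal
            ‖∑ n ∈ Finset.range (ns k), g n q.1 * c n * e n q.2‖) ^ p ∂(P.prod μ)) atTop
        ≤ liminf (fun _ : ℕ => ENNReal.ofReal (4 * p * 8 ^ (p/2) * ∫ x in Set.Ioi (0:ℝ),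
              x ^ (p-1) * Real.exp (-x^2)) *
            (∑' n, ENNReal.ofReal (‖c n‖ ^ 2) * eLpNorm (e n) (ENNReal.ofReal p) μ ^ 2)
              ^ (p/2)) atTop :=
          liminf_le_liminf (Eventually.of_forall fun k => hbound (ns k))
      _ = _ := liminf_const _
  -- conclude
  have hprod := lintegral_prod (μ := P) (ν := μ) _ (hrpm _ hFaem).aemeasurable
  have hfin : ∫⁻ ω, ∫⁻ y, (ENNReal.ofReal ‖F ω y‖) ^ p ∂μ ∂P ≠ ⊤ := by
    rw [← hprod]
    exact (hFatou.trans_lt (lt_of_le_of_ne le_top hBtop)).ne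
  have hmeas_inner : Measurable fun ω => ∫⁻ y, (ENNReal.ofReal ‖F ω y‖) ^ p ∂μ :=
    Measurable.lintegral_prod_right (hrpm _ hFaem)
  filter_upwards [ae_lt_top hmeas_inner hfin] with ω hω
  rw [eLpNorm_eq_lintegral_rpow_enorm_toReal
    (by simp only [ne_eq, ENNReal.ofReal_eq_zero, not_le]; linarith) ENNReal.ofReal_ne_top]
  refine ENNReal.rpow_lt_top_of_nonneg (by positivity) ?_
  rw [ENNReal.toReal_ofReal hp0.le]
  have hcongr : ∀ y : Y, ‖F ω y‖ₑ ^ p = (ENNReal.ofReal ‖F ω y‖) ^ p := by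
    intro y
    rw [ofReal_norm]
  rw [lintegral_congr hcongr]
  exact hω.ne
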